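/- (Representation theorem for dependence.) Let M be a countable set and let Σ be a set of pairs (x,y) of finite subsets of M that is closed under Armstrong's Axioms, i.e.: (Reflexivity) (x ∪ y, x) ∈ Σ for all finite x, y ⊆ M; (Augmentation) if (x,y) ∈ Σ then (x ∪ z, y ∪ z) ∈ Σ for all finite z ⊆ M; (Transitivity) if (x,y) ∈ Σ and (y,z) ∈ Σ then (x,z) ∈ Σ. Then there exists a diversity rank function rk on M such that for all finite x, y ⊆ M, (x,y) ∈ Σ if and only if rk(x ∪ y) = rk(x). -/

import Mathlib

/-- `rk` is a diversity rank function: it maps finite sets to nonnegative reals and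
satisfies axioms R1--R4. -/
def IsDivRank {α : Type*} [DecidableEq α] (rk : Finset α → ℝ) : Prop :=
  (∀ x : Finset α, 0 ≤ rk x) ∧
  rk ∅ = 0 ∧
  (∀ x y : Finset α, rk x ≤ rk (x ∪ y) ∧ rk (x ∪ y) ≤ rk x + rk y) ∧
  (∀ x y z : Finset α, rk (x ∪ y) = rk x → rk (x ∪ y ∪ z) = rk (x ∪ z)) ∧
  (∀ x y z : Finset α, rk (x ∪ y ∪ z) = rk x + rk (y ∪ z) → rk (x ∪ y) = rk x + rk y)

/-- Representation theorem: every set of dependence assertions over a countable set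
that is closed under Armstrong's Axioms arises from some diversity rank function. -/
theorem dep_representation {α : Type*} [Countable α] [DecidableEq α]
    (Sig : Set (Finset α × Finset α))
    (hrefl : ∀ x y : Finset α, (x ∪ y, x) ∈ Sig)
    (haug : ∀ x y z : Finset α, (x, y) ∈ Sig → (x ∪ z, y ∪ z) ∈ Sig)
    (htrans : ∀ x y z : Finset α, (x, y) ∈ Sig → (y, z) ∈ Sig → (x, z) ∈ Sig) :
    ∃ rk : Finset α → ℝ, IsDivRank rk ∧
      ∀ x y : Finset α, (x, y) ∈ Sig ↔ rk (x ∪ y) = rk x := by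
  classical
  obtain ⟨f, hf⟩ := Countable.exists_injective_nat α
  set w : α → ℝ := fun a => ((1 : ℝ) / 2) ^ (f a) with hwdef
  have hwpos : ∀ a, 0 < w a := fun a => by positivity
  have hwsum : Summable w := summable_geometric_two.comp_injective hf
  -- Armstrong closure basics
  have hsub : ∀ x y : Finset α, y ⊆ x → (x, y) ∈ Sig := by
    intro x y h
    have h2 := hrefl y x
    rwa [Finset.union_eq_right.mpr h] at h2
  have hmono : ∀ x x' y : Finset α, x ⊆ x' → (x, y) ∈ Sig → (x', y) ∈ Sig :=
    fun x x' y h hxy => htrans x' x y (hsub x' x h) hxy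
  have hunion : ∀ x y z : Finset α, (x, y) ∈ Sig → (x, z) ∈ Sig → (x, y ∪ z) ∈ Sig := by
    intro x y z h1 h2
    have h3 : (x, x ∪ y) ∈ Sig := by
      have h := haug x y x h1
      rwa [Finset.union_self, Finset.union_comm y x] at h
    have h4 : (x ∪ y, y ∪ z) ∈ Sig := by
      have h := haug x z y h2
      rwa [Finset.union_comm z y] at h
    exact htrans _ _ _ h3 h4
  have hcl : ∀ x y : Finset α, (x, y) ∈ Sig ↔ ∀ a ∈ y, (x, ({a} : Finset α)) ∈ Sig := by
    intro x y
    constructor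
    · intro h a ha
      exact htrans x y {a} h (hsub y {a} (Finset.singleton_subset_iff.mpr ha))
    · induction y using Finset.induction_on with
      | empty => intro _; exact hsub x ∅ (Finset.empty_subset x)
      | insert _ _ ha ih =>
        intro h
        rw [Finset.insert_eq]
        exact hunion x {_} _ (h _ (Finset.mem_insert_self _ _))
          (ih fun b hb => h b (Finset.mem_insert_of_mem hb))
  have hkey : ∀ x y : Finset α, (x, y) ∈ Sig →
      ∀ a : α, (x ∪ y, ({a} : Finset α)) ∈ Sig ↔ (x, ({a} : Finset α)) ∈ Sig := by
    intro x y h a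
    constructor
    · intro h2
      exact htrans _ _ _ (hunion x x y (hsub x x le_rfl) h) h2
    · exact hmono x (x ∪ y) {a} Finset.subset_union_left
  -- the measure
  set S : Finset α → Set α :=
    fun x => {a | (x, ({a} : Finset α)) ∈ Sig ∧ (∅, ({a} : Finset α)) ∉ Sig} with hSdef
  set s : Finset α → ℝ := fun x => ∑' a, (S x).indicator w a with hsdef
  have hsummable : ∀ x, Summable ((S x).indicator w) := fun x => hwsum.indicator _
  have hind_nonneg : ∀ (t : Set α) a, 0 ≤ t.indicator w a :=
    fun t a => Set.indicator_nonneg (fun b _ => (hwpos b).le) a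
  have hs_nonneg : ∀ x, 0 ≤ s x := fun x => tsum_nonneg (hind_nonneg (S x))
  have hSmono : ∀ x y : Finset α, S x ⊆ S (x ∪ y) := by
    intro x y a ha
    exact ⟨hmono _ _ _ Finset.subset_union_left ha.1, ha.2⟩
  have hsmono : ∀ x y : Finset α, s x ≤ s (x ∪ y) := by
    intro x y
    exact Summable.tsum_le_tsum
      (fun a => Set.indicator_le_indicator_of_subset (hSmono x y) (fun b => (hwpos b).le) a)
      (hsummable x) (hsummable _)
  have hsle2 : ∀ x, s x ≤ 2 := by
    intro x
    have h1 : s x ≤ ∑' a, w a :=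
      Summable.tsum_le_tsum (fun a => by
        by_cases h : a ∈ S x
        · rw [Set.indicator_of_mem h]
        · rw [Set.indicator_of_notMem h]; exact (hwpos a).le) (hsummable x) hwsum
    have h2 : ∑' a, w a ≤ ∑' n : ℕ, ((1 : ℝ) / 2) ^ n :=
      Summable.tsum_le_tsum_of_inj f hf (fun n _ => by positivity) (fun a => le_rfl) hwsum
        summable_geometric_two
    have h3 : ∑' n : ℕ, ((1 : ℝ) / 2) ^ n = 2 := tsum_geometric_two
    linarith
  have hstrict : ∀ x y : Finset α, (x, y) ∉ Sig → s x < s (x ∪ y) := by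
    intro x y hnot
    have hex : ∃ a ∈ y, (x, ({a} : Finset α)) ∉ Sig := by
      by_contra h
      push_neg at h
      exact hnot ((hcl x y).mpr h)
    obtain ⟨a, ha, hna⟩ := hex
    have haxy : (x ∪ y, ({a} : Finset α)) ∈ Sig :=
      hsub _ _ (Finset.singleton_subset_iff.mpr (Finset.mem_union_right x ha))
    have hna0 : (∅, ({a} : Finset α)) ∉ Sig :=
      fun h0 => hna (hmono ∅ x {a} (Finset.empty_subset x) h0)
    refine Summable.tsum_lt_tsum (i := a)
      (fun b => Set.indicator_le_indicator_of_subset (hSmono x y) (fun b => (hwpos b).le) b)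
      ?_ (hsummable x) (hsummable _)
    have h1 : a ∉ S x := fun h => hna h.1
    have h2 : a ∈ S (x ∪ y) := ⟨haxy, hna0⟩
    rw [Set.indicator_of_notMem h1, Set.indicator_of_mem h2]
    exact hwpos a
  have hseq : ∀ x y : Finset α, (x, y) ∈ Sig → s (x ∪ y) = s x := by
    intro x y h
    have hS : S (x ∪ y) = S x := by
      ext a
      simp only [hSdef, Set.mem_setOf_eq]
      exact and_congr_left' (hkey x y h a)
    simp only [hsdef, hS]
  have hsiff : ∀ x y : Finset α, (x, y) ∈ Sig ↔ s (x ∪ y) = s x := by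
    intro x y
    refine ⟨hseq x y, fun h => ?_⟩
    by_contra hnot
    exact absurd h (hstrict x y hnot).ne'
  have hzero : ∀ x : Finset α, s x = 0 ↔ (∅, x) ∈ Sig := by
    intro x
    constructor
    · intro h0
      refine (hcl ∅ x).mpr fun a ha => ?_
      by_contra hna
      have hmem : a ∈ S x := ⟨hsub x {a} (Finset.singleton_subset_iff.mpr ha), hna⟩
      have : 0 < s x := Summable.tsum_pos (hsummable x) (hind_nonneg (S x)) a
        (by rw [Set.indicator_of_mem hmem]; exact hwpos a)
      linarith
    · intro h
      have hS : S x = ∅ := by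
        ext a
        simp only [hSdef, Set.mem_setOf_eq, Set.mem_empty_iff_false, iff_false, not_and, not_not]
        intro h1
        exact htrans ∅ x {a} h h1
      simp only [hsdef, hS, Set.indicator_empty, tsum_zero]
  -- the rank function
  set rk : Finset α → ℝ := fun x => if s x = 0 then 0 else 3 / 4 + s x / 8 with hrkdef
  have hrk_nonneg : ∀ x, 0 ≤ rk x := by
    intro x
    simp only [hrkdef]
    split
    · exact le_rfl
    · have := hs_nonneg x; linarith
  have hrk_le_one : ∀ x, rk x ≤ 1 := by
    intro x
    simp only [hrkdef]
    split
    · norm_num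
    · have := hsle2 x; linarith
  have hrk_lo : ∀ x, s x ≠ 0 → 3 / 4 ≤ rk x := by
    intro x hx
    simp only [hrkdef, if_neg hx]
    have := hs_nonneg x; linarith
  have hspos : ∀ x, s x ≠ 0 → 0 < s x := fun x hx => lt_of_le_of_ne (hs_nonneg x) (Ne.symm hx)
  have hrk_eq_iff : ∀ x y : Finset α, rk (x ∪ y) = rk x ↔ s (x ∪ y) = s x := by
    intro x y
    constructor
    · intro h
      by_contra hne
      have hlt : s x < s (x ∪ y) := lt_of_le_of_ne (hsmono x y) (Ne.symm hne)
      have : rk x < rk (x ∪ y) := by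
        simp only [hrkdef]
        by_cases h1 : s x = 0
        · rw [if_pos h1, if_neg (by linarith [h1 ▸ hlt] : s (x ∪ y) ≠ 0)]
          have := hs_nonneg (x ∪ y); linarith
        · rw [if_neg h1, if_neg (by intro h2; rw [h2] at hlt; exact h1 (le_antisymm (by linarith) (hs_nonneg x)))]
          linarith
      linarith [this, h]
    · intro h; simp only [hrkdef, h]
  have hmain : ∀ x y : Finset α, (x, y) ∈ Sig ↔ rk (x ∪ y) = rk x := by
    intro x y
    rw [hrk_eq_iff, hsiff]
  refine ⟨rk, ⟨hrk_nonneg, ?_, ?_, ?_, ?_⟩, hmain⟩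
  · -- rk ∅ = 0
    have h0 : s ∅ = 0 := (hzero ∅).mpr (hsub ∅ ∅ le_rfl)
    simp only [hrkdef, if_pos h0]
  · -- monotone and subadditive
    intro x y
    constructor
    · by_cases h1 : s x = 0
      · simp only [hrkdef, if_pos h1]
        exact hrk_nonneg (x ∪ y)
      · have h2 : s (x ∪ y) ≠ 0 := by
          intro h; exact h1 (le_antisymm (h ▸ hsmono x y) (hs_nonneg x))
        simp only [hrkdef, if_neg h1, if_neg h2]
        linarith [hsmono x y]
    · by_cases h1 : s x = 0
      · -- x depends on ∅, so x ∪ y ~ y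
        have hx : (∅, x) ∈ Sig := (hzero x).mp h1
        have hyx : (y, x) ∈ Sig := hmono ∅ y x (Finset.empty_subset y) hx
        have : rk (x ∪ y) = rk y := by
          rw [Finset.union_comm x y]; exact (hmain y x).mp hyx
        rw [this]
        have : rk x = 0 := by simp only [hrkdef, if_pos h1]
        linarith [hrk_nonneg y]
      · by_cases h2 : s y = 0
        · have hy : (∅, y) ∈ Sig := (hzero y).mp h2
          have hxy : (x, y) ∈ Sig := hmono ∅ x y (Finset.empty_subset x) hy
          have h3 : rk (x ∪ y) = rk x := (hmain x y).mp hxy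
          have h4 : rk y = 0 := by simp only [hrkdef, if_pos h2]
          linarith
        · have := hrk_lo x h1
          have := hrk_lo y h2
          have := hrk_le_one (x ∪ y)
          linarith
  · -- R3
    intro x y z h
    have hxy : (x, y) ∈ Sig := (hmain x y).mpr h
    have hxzy : (x ∪ z, y) ∈ Sig := hmono x (x ∪ z) y Finset.subset_union_left hxy
    have h2 : rk (x ∪ z ∪ y) = rk (x ∪ z) := (hmain (x ∪ z) y).mp hxzy
    rwa [Finset.union_right_comm x z y] at h2
  · -- R4
    intro x y z h
    by_cases h1 : s x = 0
    · have hx : (∅, x) ∈ Sig := (hzero x).mp h1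
      have hyx : (y, x) ∈ Sig := hmono ∅ y x (Finset.empty_subset y) hx
      have h3 : rk (x ∪ y) = rk y := by
        rw [Finset.union_comm x y]; exact (hmain y x).mp hyx
      have h4 : rk x = 0 := by simp only [hrkdef, if_pos h1]
      rw [h3, h4, zero_add]
    · by_cases h2 : s (y ∪ z) = 0
      · have hyz : (∅, y ∪ z) ∈ Sig := (hzero (y ∪ z)).mp h2
        have hy : (∅, y) ∈ Sig :=
          htrans ∅ (y ∪ z) y hyz (hsub (y ∪ z) y Finset.subset_union_left)
        have hsy : s y = 0 := (hzero y).mpr hy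
        have hxy : (x, y) ∈ Sig := hmono ∅ x y (Finset.empty_subset x) hy
        have h3 : rk (x ∪ y) = rk x := (hmain x y).mp hxy
        have h4 : rk y = 0 := by simp only [hrkdef, if_pos hsy]
        rw [h3, h4, add_zero]
      · exfalso
        have := hrk_lo x h1
        have := hrk_lo (y ∪ z) h2
        have := hrk_le_one (x ∪ y ∪ z)
        linarith
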